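/- For every positive integer n, a(a(n)) = a(n) + n − 1 = b(n) − 1 and a(b(n)) = a(n) + b(n). -/

import Mathlib

noncomputable def φ : ℝ := (1 + Real.sqrt 5) / 2
noncomputable def a (n : ℕ) : ℤ := ⌊(n : ℝ) * φ⌋
noncomputable def b (n : ℕ) : ℤ := ⌊(n : ℝ) * φ ^ 2⌋

lemma phi_sq : φ ^ 2 = φ + 1 := by
  have h : Real.sqrt 5 ^ 2 = 5 := Real.sq_sqrt (by norm_num)
  unfold φ; nlinarith [h]

lemma phi_gt : 1 < φ := by
  have h : 2 < Real.sqrt 5 := by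
    nlinarith [Real.sq_sqrt (show (5:ℝ) ≥ 0 by norm_num), Real.sqrt_nonneg 5]
  unfold φ; linarith

lemma phi_lt : φ < 2 := by
  have h : Real.sqrt 5 < 3 := by
    nlinarith [Real.sq_sqrt (show (5:ℝ) ≥ 0 by norm_num), Real.sqrt_nonneg 5]
  unfold φ; linarith

lemma irr_nphi (n : ℕ) (hn : 0 < n) : Irrational ((n : ℝ) * φ) := by
  have h5 : Irrational (Real.sqrt 5) := by simpa using (by norm_num : Nat.Prime 5).irrational_sqrt
  have h1 : Irrational (1 + Real.sqrt 5) := by simpa using h5.natCast_add 1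
  have h2 : Irrational φ := h1.div_natCast (by norm_num)
  exact h2.natCast_mul (by exact_mod_cast hn.ne')

theorem a_of_a_and_a_of_b (n : ℕ) (hn : 0 < n) :
    ⌊((a n : ℤ) : ℝ) * φ⌋ = a n + n - 1 ∧
    ⌊((a n : ℤ) : ℝ) * φ⌋ = b n - 1 ∧
    ⌊((b n : ℤ) : ℝ) * φ⌋ = a n + b n := by
  have hsq : φ ^ 2 = φ + 1 := phi_sq
  have h1 : 1 < φ := phi_gt
  have h2 : φ < 2 := phi_lt
  set x : ℝ := (n : ℝ) * φ with hx
  set t : ℝ := Int.fract x with hts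
  have ht0 : 0 < t := (Int.fract_pos).mpr ((irr_nphi n hn).ne_int ⌊x⌋)
  have ht1 : t < 1 := Int.fract_lt_one x
  have hA : ((a n : ℤ) : ℝ) = x - t := by
    rw [hts, Int.self_sub_fract]; rfl
  have hxφ : x * φ = x + n := by
    rw [hx]; linear_combination (n : ℝ) * hsq
  have hb : b n = a n + n := by
    have e : (n : ℝ) * φ ^ 2 = (n : ℝ) * φ + (n : ℤ) := by push_cast [hsq]; ring
    rw [b, e, Int.floor_add_intCast]; rfl
  have hmul1 : t * 1 < t * φ := by nlinarith
  have hmul2 : t * φ < t * 2 := by nlinarith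
  have key1 : ⌊((a n : ℤ) : ℝ) * φ⌋ = a n + n - 1 := by
    rw [Int.floor_eq_iff]
    have e : ((a n : ℤ) : ℝ) * φ = x + n - t * φ := by
      rw [hA]; linear_combination hxφ
    constructor
    · rw [e]; push_cast [hA]; nlinarith
    · rw [e]; push_cast [hA]; nlinarith
  refine ⟨key1, by rw [key1, hb], ?_⟩
  have hBr : ((b n : ℤ) : ℝ) = x - t + n := by
    rw [hb]; push_cast [hA]; ring
  have e : ((b n : ℤ) : ℝ) * φ = 2 * x + n - t * φ := by
    rw [hBr]; linear_combination hxφ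
  rw [Int.floor_eq_iff]
  constructor
  · rw [e]; push_cast [hb, hA]; nlinarith
  · rw [e]; push_cast [hb, hA]; nlinarith
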